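/- arXiv:1807.08429 — 2 statements merged into one kernel-verified Lean document; each statement's English description precedes it below -/
import Mathlib

section
/- For the bivariate Gumbel copula with δ>1 and fixed α ∈ (0,1), the conditional quantile satisfies -log C_{V|U}^{-1}(α|u;δ) ~ (-δ log α)^{1/δ} (-log u)^{1-1/δ} as u → 0^+, i.e., the ratio of the two sides tends to 1. -/
open Real Set Filter Topology

/-- For the bivariate Gumbel copula with `δ>1` and fixed `α ∈ (0,1)`, the conditional quantile
function `q u = C_{V|U}^{-1}(α|u;δ)` (the inverse in `v` of the conditional CDF
`C_{V|U}(v|u) = u⁻¹ exp{-[(-log u)^δ+(-log v)^δ]^{1/δ}} [1+((-log v)/(-log u))^δ]^{1/δ-1}`)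
satisfies `-log q(u) ~ (-δ log α)^{1/δ} (-log u)^{1-1/δ}` as `u → 0⁺`. -/
theorem gumbel_quantile_lower_tail (δ α : ℝ) (hδ : 1 < δ) (hα : α ∈ Ioo (0:ℝ) 1)
    (q : ℝ → ℝ) (hq_mem : ∀ u ∈ Ioo (0:ℝ) 1, q u ∈ Ioo (0:ℝ) 1)
    (hq : ∀ u ∈ Ioo (0:ℝ) 1,
      u⁻¹ * Real.exp (-(((-Real.log u) ^ δ + (-Real.log (q u)) ^ δ) ^ (1 / δ))) *
        (1 + ((-Real.log (q u)) / (-Real.log u)) ^ δ) ^ (1 / δ - 1) = α) :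
    Tendsto (fun u : ℝ =>
        (-Real.log (q u)) / ((-δ * Real.log α) ^ (1 / δ) * (-Real.log u) ^ (1 - 1 / δ)))
      (𝓝[>] (0:ℝ)) (𝓝 1) := by
  have hδ0 : (0:ℝ) < δ := by linarith
  have hδne : δ ≠ 0 := ne_of_gt hδ0
  set L : ℝ := -Real.log α with hLdef
  have hL0 : 0 < L := by
    have := Real.log_neg hα.1 hα.2
    simp only [hLdef]; linarith
  set l : Filter ℝ := 𝓝[>] (0:ℝ) with hl
  have hmem : ∀ᶠ u in l, u ∈ Ioo (0:ℝ) 1 :=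
    Ioo_mem_nhdsGT_of_mem ⟨le_refl _, one_pos⟩
  have hx : Tendsto (fun u : ℝ => -Real.log u) l atTop :=
    tendsto_neg_atTop_iff.mpr Real.tendsto_log_nhdsGT_zero
  -- pointwise facts
  have hpt : ∀ᶠ u in l, 0 < -Real.log u ∧ 0 < -Real.log (q u) ∧
      0 < ((-Real.log (q u)) / (-Real.log u)) ^ δ ∧
      (-Real.log u) * ((1 + ((-Real.log (q u)) / (-Real.log u)) ^ δ) ^ (1/δ) - 1)
        = L + (1/δ - 1) * Real.log (1 + ((-Real.log (q u)) / (-Real.log u)) ^ δ) := by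
    filter_upwards [hmem] with u hu
    have heq := hq u hu
    set X : ℝ := -Real.log u with hX
    set Y : ℝ := -Real.log (q u) with hY
    set T : ℝ := (Y / X) ^ δ with hT
    have hxu : 0 < X := by
      have := Real.log_neg hu.1 hu.2; simp only [hX]; linarith
    have hqu := hq_mem u hu
    have hyu : 0 < Y := by
      have := Real.log_neg hqu.1 hqu.2; simp only [hY]; linarith
    have htu : 0 < T := by
      rw [hT]; exact Real.rpow_pos_of_pos (div_pos hyu hxu) δ
    refine ⟨hxu, hyu, htu, ?_⟩
    have h1 : X ^ δ + Y ^ δ = X ^ δ * (1 + T) := by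
      have ht' : T = Y ^ δ / X ^ δ := by
        rw [hT]; exact Real.div_rpow hyu.le hxu.le δ
      rw [ht', mul_add, mul_one,
        mul_div_cancel₀ _ (ne_of_gt (Real.rpow_pos_of_pos hxu δ))]
    have h2 : (X ^ δ * (1 + T)) ^ (1/δ) = X * (1 + T) ^ (1/δ) := by
      rw [Real.mul_rpow (Real.rpow_nonneg hxu.le δ) (by linarith),
        ← Real.rpow_mul hxu.le, mul_one_div, div_self hδne, Real.rpow_one]
    have hinv : u⁻¹ = Real.exp X := by
      rw [hX, Real.exp_neg, Real.exp_log hu.1]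
    rw [h1, h2, hinv, ← Real.exp_add] at heq
    have hlog := congrArg Real.log heq
    rw [Real.log_mul (Real.exp_ne_zero _)
        (ne_of_gt (Real.rpow_pos_of_pos (by linarith) _)),
      Real.log_exp, Real.log_rpow (by linarith)] at hlog
    have hexp : X * ((1 + T) ^ (1/δ) - 1) = X * (1 + T) ^ (1/δ) - X := by ring
    linarith [hlog, hexp, hLdef]
  -- t tends to zero
  have ht0 : Tendsto (fun u : ℝ => ((-Real.log (q u)) / (-Real.log u)) ^ δ) l (𝓝 0) := by
    have hub : Tendsto (fun u : ℝ => (1 + L / (-Real.log u)) ^ δ - 1) l (𝓝 0) := by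
      have h1 : Tendsto (fun u : ℝ => L / (-Real.log u)) l (𝓝 0) :=
        tendsto_const_nhds.div_atTop hx
      have h2 : Tendsto (fun u : ℝ => (1 + L / (-Real.log u)) ^ δ) l (𝓝 1) := by
        have := ((tendsto_const_nhds (x := (1:ℝ))).add h1).rpow_const (p := δ) (Or.inr hδ0.le)
        simpa using this
      have := h2.sub (tendsto_const_nhds (x := (1:ℝ)))
      simpa using this
    refine tendsto_of_tendsto_of_tendsto_of_le_of_le' tendsto_const_nhds hub ?_ ?_
    · filter_upwards [hpt] with u hu; exact hu.2.2.1.le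
    · filter_upwards [hpt] with u hu
      obtain ⟨hxu, hyu, htu, hid⟩ := hu
      set X : ℝ := -Real.log u with hX
      set T : ℝ := ((-Real.log (q u)) / X) ^ δ with hT
      have hlogpos : 0 ≤ Real.log (1 + T) := Real.log_nonneg (by linarith)
      have hcoef : 1/δ - 1 ≤ 0 := by
        have : 1/δ < 1 := by rw [div_lt_one hδ0]; exact hδ
        linarith
      have hbd : X * ((1 + T) ^ (1/δ) - 1) ≤ L := by
        nlinarith [mul_nonpos_of_nonpos_of_nonneg hcoef hlogpos]
      have h3 : (1 + T) ^ (1/δ) ≤ 1 + L / X := by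
        have : (1 + T) ^ (1/δ) - 1 ≤ L / X := by
          rw [le_div_iff₀ hxu, mul_comm]; exact hbd
        linarith
      have h4 : ((1 + T) ^ (1/δ)) ^ δ ≤ (1 + L / X) ^ δ :=
        Real.rpow_le_rpow (Real.rpow_nonneg (by linarith) _) h3 hδ0.le
      rw [← Real.rpow_mul (by linarith : (0:ℝ) ≤ 1 + T), one_div_mul_cancel hδne,
        Real.rpow_one] at h4
      linarith
  have htpos : Tendsto (fun u : ℝ => ((-Real.log (q u)) / (-Real.log u)) ^ δ) l (𝓝[>] 0) := by
    refine tendsto_nhdsWithin_of_tendsto_nhds_of_eventually_within _ ht0 ?_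
    filter_upwards [hpt] with u hu; exact hu.2.2.1
  -- slope limit
  have hder : HasDerivAt (fun s : ℝ => (1 + s) ^ (1/δ)) (1/δ) 0 := by
    have h1 : HasDerivAt (fun s : ℝ => 1 + s) 1 0 := by
      simpa using (hasDerivAt_id (0:ℝ)).const_add 1
    have h2 := Real.hasDerivAt_rpow_const (x := (1:ℝ) + 0) (p := 1/δ) (Or.inl (by norm_num))
    have h3 := h2.comp 0 h1
    have h4 : (1/δ * ((1:ℝ) + 0) ^ (1/δ - 1)) * 1 = 1/δ := by
      norm_num
    rw [h4] at h3
    exact h3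
  have hslope : Tendsto (fun s : ℝ => ((1 + s) ^ (1/δ) - 1) / s) (𝓝[>] (0:ℝ)) (𝓝 (1/δ)) := by
    have h := hasDerivAt_iff_tendsto_slope.mp hder
    have h' := h.mono_left (nhdsWithin_mono _ (fun s hs => (ne_of_gt hs : s ≠ 0)))
    refine h'.congr' ?_
    filter_upwards [self_mem_nhdsWithin] with s hs
    simp [slope_def_field]
  have hg : Tendsto (fun u : ℝ =>
      ((1 + ((-Real.log (q u)) / (-Real.log u)) ^ δ) ^ (1/δ) - 1) /
        (((-Real.log (q u)) / (-Real.log u)) ^ δ)) l (𝓝 (1/δ)) := hslope.comp htpos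
  -- x * t tends to δ * L
  have hxt : Tendsto (fun u : ℝ =>
      (-Real.log u) * ((-Real.log (q u)) / (-Real.log u)) ^ δ) l (𝓝 (δ * L)) := by
    have hlogt : Tendsto (fun u : ℝ =>
        Real.log (1 + ((-Real.log (q u)) / (-Real.log u)) ^ δ)) l (𝓝 0) := by
      have h1 : Tendsto (fun u : ℝ =>
          1 + ((-Real.log (q u)) / (-Real.log u)) ^ δ) l (𝓝 1) := by
        simpa using (tendsto_const_nhds (x := (1:ℝ))).add ht0
      have := (Real.continuousAt_log (by norm_num : (1:ℝ) ≠ 0)).tendsto.comp h1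
      simpa [Function.comp_def] using this
    have hnum : Tendsto (fun u : ℝ =>
        L + (1/δ - 1) * Real.log (1 + ((-Real.log (q u)) / (-Real.log u)) ^ δ)) l (𝓝 L) := by
      have := (tendsto_const_nhds (x := L)).add
        ((tendsto_const_nhds (x := (1/δ - 1))).mul hlogt)
      simpa using this
    have hdiv := hnum.div hg (by positivity : (1:ℝ)/δ ≠ 0)
    have hval : L / (1/δ) = δ * L := by field_simp
    rw [hval] at hdiv
    refine hdiv.congr' ?_
    filter_upwards [hpt] with u hu
    obtain ⟨hxu, hyu, htu, hid⟩ := hu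
    simp only [Pi.div_apply]
    set X : ℝ := -Real.log u with hX
    set T : ℝ := ((-Real.log (q u)) / X) ^ δ with hT
    have hc : 0 < (1 + T) ^ (1/δ) - 1 := by
      have h1 : (1:ℝ) < (1 + T) ^ (1/δ) := by
        rw [Real.one_lt_rpow_iff_of_pos (by linarith : (0:ℝ) < 1 + T)]
        exact Or.inl ⟨by linarith, by positivity⟩
      linarith
    rw [← hid]
    field_simp
  -- conclusion
  have hA : -δ * Real.log α = δ * L := by rw [hLdef]; ring
  have h1 : Tendsto (fun u : ℝ =>
      (-Real.log u) * ((-Real.log (q u)) / (-Real.log u)) ^ δ / (δ * L)) l (𝓝 1) := by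
    have := hxt.div_const (δ * L)
    rwa [div_self (by positivity : (δ*L) ≠ 0)] at this
  have hfin : Tendsto (fun u : ℝ =>
      ((-Real.log u) * ((-Real.log (q u)) / (-Real.log u)) ^ δ / (δ * L)) ^ (1/δ))
      l (𝓝 1) := by
    have := h1.rpow_const (Or.inr (by positivity : (0:ℝ) ≤ 1/δ))
    simpa using this
  refine hfin.congr' ?_
  filter_upwards [hpt] with u hu
  obtain ⟨hxu, hyu, htu, _⟩ := hu
  set X : ℝ := -Real.log u with hX
  set Y : ℝ := -Real.log (q u) with hY
  set T : ℝ := (Y / X) ^ δ with hT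
  have hyx : Y = X * T ^ (1/δ : ℝ) := by
    rw [hT, ← Real.rpow_mul (div_nonneg hyu.le hxu.le), mul_one_div, div_self hδne,
      Real.rpow_one, mul_div_cancel₀ _ (ne_of_gt hxu)]
  have key : X ^ (1/δ : ℝ) * X ^ (1 - 1/δ : ℝ) = X := by
    rw [← Real.rpow_add hxu]; norm_num
  have hApos : (0:ℝ) < (δ * L) ^ (1/δ : ℝ) := Real.rpow_pos_of_pos (by positivity) _
  have hxxpos : (0:ℝ) < X ^ (1 - 1/δ : ℝ) := Real.rpow_pos_of_pos hxu _
  rw [hA, Real.div_rpow (by positivity : (0:ℝ) ≤ X * T) (by positivity : (0:ℝ) ≤ δ * L),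
    Real.mul_rpow hxu.le htu.le, hyx,
    div_eq_div_iff (ne_of_gt hApos) (ne_of_gt (mul_pos hApos hxxpos))]
  linear_combination (T ^ (1/δ : ℝ) * (δ * L) ^ (1/δ : ℝ)) * key
end

section
/- Let (X,Y) have standard normal N(0,1) margins and copula C with positive dependence. Fix α ∈ (0,1) and suppose -log C_{V|U}^{-1}(α|u) ~ k_α (-log u)^η as u → 0^+ for constants k_α > 0 and η ∈ (0,1]. Then the conditional quantile of Y given X=x satisfies F_{Y|X}^{-1}(α|x) ~ -(2^{1-η} k_α)^{1/2} |x|^η as x → -∞. -/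
open Real Set Filter Topology
open MeasureTheory

/-- The standard normal CDF `Φ`. -/
noncomputable def stdNormalCDF (x : ℝ) : ℝ :=
  (∫ t in Set.Iic x, Real.exp (-t ^ 2 / 2)) / Real.sqrt (2 * Real.pi)


lemma gauss_integrable : Integrable (fun t : ℝ => Real.exp (-t ^ 2 / 2)) := by
  have h := integrable_exp_neg_mul_sq (by norm_num : (0:ℝ) < 1/2)
  refine h.congr (Eventually.of_forall fun t => ?_)
  ring_nf

lemma gauss_pos (x : ℝ) : 0 < ∫ t in Iic x, Real.exp (-t ^ 2 / 2) := by
  rw [setIntegral_pos_iff_support_of_nonneg_ae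
    (Eventually.of_forall fun t => (Real.exp_pos _).le) gauss_integrable.integrableOn]
  have : Function.support (fun t : ℝ => Real.exp (-t ^ 2 / 2)) = univ := by
    ext t; simp [Real.exp_ne_zero]
  rw [this, univ_inter]
  simp [Real.exp_ne_zero]

lemma gauss_mono {x y : ℝ} (h : x ≤ y) :
    (∫ t in Iic x, Real.exp (-t ^ 2 / 2)) ≤ ∫ t in Iic y, Real.exp (-t ^ 2 / 2) := by
  exact setIntegral_mono_set gauss_integrable.integrableOn
    (Eventually.of_forall fun t => (Real.exp_pos _).le)
    (HasSubset.Subset.eventuallyLE (Iic_subset_Iic.2 h))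

lemma gauss_upper {x : ℝ} (hx : x ≤ -1) :
    (∫ t in Iic x, Real.exp (-t ^ 2 / 2)) ≤ Real.exp (-x ^ 2 / 2) := by
  have h1 : (∫ t in Iic x, Real.exp (-t ^ 2 / 2))
      ≤ ∫ t in Iic x, Real.exp (-x ^ 2 / 2) * Real.exp (t - x) := by
    refine setIntegral_mono_on gauss_integrable.integrableOn ?_ measurableSet_Iic ?_
    · refine (((integrableOn_exp_Iic x).div_const (Real.exp x)).const_mul
        (Real.exp (-x ^ 2 / 2))).congr (Eventually.of_forall fun t => ?_)
      simp [Real.exp_sub]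
    · intro t ht
      rw [← Real.exp_add]
      apply Real.exp_le_exp.2
      have ht' : t ≤ x := ht
      nlinarith [mul_nonneg (sub_nonneg.2 ht') (by linarith : -(x + t) - 2 ≥ 0)]
  have h2 : (∫ t in Iic x, Real.exp (-x ^ 2 / 2) * Real.exp (t - x))
      = Real.exp (-x ^ 2 / 2) := by
    rw [integral_const_mul]
    have : (∫ t in Iic x, Real.exp (t - x)) = 1 := by
      simp_rw [Real.exp_sub]
      rw [integral_div, integral_exp_Iic, div_self (Real.exp_ne_zero x)]
    rw [this, mul_one]
  linarith

lemma gauss_lower {x : ℝ} (hx : x ≤ 0) :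
    Real.exp (-(x - 1) ^ 2 / 2) ≤ ∫ t in Iic x, Real.exp (-t ^ 2 / 2) := by
  have h1 : (∫ t in Ioc (x - 1) x, Real.exp (-t ^ 2 / 2))
      ≤ ∫ t in Iic x, Real.exp (-t ^ 2 / 2) :=
    setIntegral_mono_set gauss_integrable.integrableOn
      (Eventually.of_forall fun t => (Real.exp_pos _).le)
      (HasSubset.Subset.eventuallyLE (fun t ht => ht.2))
  have h2 : Real.exp (-(x - 1) ^ 2 / 2) ≤ ∫ t in Ioc (x - 1) x, Real.exp (-t ^ 2 / 2) := by
    rw [← intervalIntegral.integral_of_le (by linarith : x - 1 ≤ x)]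
    have := intervalIntegral.integral_mono_on (μ := volume)
      (f := fun _ : ℝ => Real.exp (-(x - 1) ^ 2 / 2))
      (g := fun t : ℝ => Real.exp (-t ^ 2 / 2))
      (by linarith : x - 1 ≤ x) intervalIntegrable_const
      gauss_integrable.intervalIntegrable ?_
    · simpa using this
    · intro t ht
      apply Real.exp_le_exp.2
      have h1 := ht.1; have h2 := ht.2
      nlinarith
  linarith

lemma sqrt2pi_one_le : 1 ≤ Real.sqrt (2 * Real.pi) := by
  rw [show (1:ℝ) = Real.sqrt 1 by simp]
  exact Real.sqrt_le_sqrt (by nlinarith [Real.pi_gt_three])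

lemma sqrt2pi_pos : 0 < Real.sqrt (2 * Real.pi) := lt_of_lt_of_le one_pos sqrt2pi_one_le

lemma Phi_pos (x : ℝ) : 0 < stdNormalCDF x := div_pos (gauss_pos x) sqrt2pi_pos

lemma Phi_mono {x y : ℝ} (h : x ≤ y) : stdNormalCDF x ≤ stdNormalCDF y :=
  div_le_div_of_nonneg_right (gauss_mono h) sqrt2pi_pos.le

lemma Phi_upper {x : ℝ} (hx : x ≤ -1) : stdNormalCDF x ≤ Real.exp (-x ^ 2 / 2) := by
  have h1 := gauss_upper hx
  have h2 : stdNormalCDF x ≤ ∫ t in Iic x, Real.exp (-t ^ 2 / 2) := by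
    rw [stdNormalCDF, div_le_iff₀ sqrt2pi_pos]
    nlinarith [gauss_pos x, sqrt2pi_one_le]
  linarith

lemma Phi_lower {x : ℝ} (hx : x ≤ 0) :
    Real.exp (-(x - 1) ^ 2 / 2) / Real.sqrt (2 * Real.pi) ≤ stdNormalCDF x :=
  div_le_div_of_nonneg_right (gauss_lower hx) sqrt2pi_pos.le

lemma neglog_Phi_lower {x : ℝ} (hx : x ≤ -1) : x ^ 2 / 2 ≤ -Real.log (stdNormalCDF x) := by
  have h := Real.log_le_log (Phi_pos x) (Phi_upper hx)
  rw [Real.log_exp] at h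
  linarith

lemma neglog_Phi_upper {x : ℝ} (hx : x ≤ 0) :
    -Real.log (stdNormalCDF x) ≤ (x - 1) ^ 2 / 2 + Real.log (Real.sqrt (2 * Real.pi)) := by
  have h := Real.log_le_log (div_pos (Real.exp_pos _) sqrt2pi_pos) (Phi_lower hx)
  rw [Real.log_div (Real.exp_ne_zero _) (ne_of_gt sqrt2pi_pos), Real.log_exp] at h
  linarith

lemma L1 : Tendsto (fun x : ℝ => (-Real.log (stdNormalCDF x)) / (x ^ 2 / 2))
    atBot (𝓝 1) := by
  set c := Real.log (Real.sqrt (2 * Real.pi)) with hc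
  have hc0 : 0 ≤ c := Real.log_nonneg sqrt2pi_one_le
  have hupper : Tendsto (fun x : ℝ => ((x - 1) ^ 2 + 2 * c) / x ^ 2) atBot (𝓝 1) := by
    have hinv : Tendsto (fun x : ℝ => x⁻¹) atBot (𝓝 (0:ℝ)) := by
      have h := ((tendsto_inv_atTop_zero (𝕜 := ℝ)).comp tendsto_neg_atBot_atTop).neg
      simp only [neg_zero] at h
      refine h.congr fun x => by rw [Function.comp_apply, inv_neg, neg_neg]
    have key : Tendsto (fun x : ℝ => 1 - 2 * x⁻¹ + (1 + 2 * c) * (x⁻¹ * x⁻¹)) atBot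
        (𝓝 (1 - 2 * 0 + (1 + 2 * c) * (0 * 0))) := by
      exact ((tendsto_const_nhds.sub (hinv.const_mul 2)).add
        ((hinv.mul hinv).const_mul _))
    simp only [mul_zero, zero_mul, sub_zero, add_zero] at key
    refine key.congr' ?_
    filter_upwards [eventually_le_atBot (-1 : ℝ)] with x hx
    have hx0 : x ≠ 0 := by intro h; rw [h] at hx; norm_num at hx
    field_simp
    ring
  refine tendsto_of_tendsto_of_tendsto_of_le_of_le' tendsto_const_nhds hupper ?_ ?_
  · filter_upwards [eventually_le_atBot (-1 : ℝ)] with x hx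
    have h1 := neglog_Phi_lower hx
    have h2 : 0 < x ^ 2 / 2 := by nlinarith
    rw [le_div_iff₀ h2]
    linarith
  · filter_upwards [eventually_le_atBot (-1 : ℝ)] with x hx
    have h1 := neglog_Phi_upper (by linarith : x ≤ 0)
    have h2 : 0 < x ^ 2 / 2 := by nlinarith
    have h3 : 0 < x ^ 2 := by nlinarith
    rw [div_le_div_iff₀ h2 h3]
    nlinarith [neglog_Phi_lower hx]

lemma L2 : Tendsto stdNormalCDF atBot (𝓝[>] (0 : ℝ)) := by
  rw [tendsto_nhdsWithin_iff]
  constructor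
  · have hexp : Tendsto (fun x : ℝ => Real.exp (-x ^ 2 / 2)) atBot (𝓝 0) := by
      apply Real.tendsto_exp_atBot.comp
      refine tendsto_atBot_mono' atBot ?_ tendsto_id
      filter_upwards [eventually_le_atBot (-2 : ℝ)] with x hx
      simp only [id]
      nlinarith
    refine tendsto_of_tendsto_of_tendsto_of_le_of_le' tendsto_const_nhds hexp ?_ ?_
    · exact Eventually.of_forall fun x => (Phi_pos x).le
    · filter_upwards [eventually_le_atBot (-1 : ℝ)] with x hx using Phi_upper hx
  · exact Eventually.of_forall fun x => Phi_pos x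

/-- Let `(X,Y)` have standard normal margins and copula `C` with conditional quantile
function `q u = C_{V|U}^{-1}(α|u)`.  Fix `α ∈ (0,1)` and suppose
`-log q(u) ~ k_α (-log u)^η` as `u → 0⁺` with `k_α > 0`, `η ∈ (0,1]`.  Then the conditional
quantile `Qy x = F_{Y|X}^{-1}(α|x)` (characterized by `Φ(Qy x) = q(Φ x)`) satisfies
`Qy x ~ -(2^{1-η} k_α)^{1/2} |x|^η` as `x → -∞`. -/
theorem cond_quantile_lower_tail_shape (α k η : ℝ) (hα : α ∈ Ioo (0:ℝ) 1)
    (hk : 0 < k) (hη : η ∈ Ioc (0:ℝ) 1)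
    (q : ℝ → ℝ) (hq_mem : ∀ u ∈ Ioo (0:ℝ) 1, q u ∈ Ioo (0:ℝ) 1)
    (hq : Tendsto (fun u : ℝ => (-Real.log (q u)) / (k * (-Real.log u) ^ η))
      (𝓝[>] (0:ℝ)) (𝓝 1))
    (Qy : ℝ → ℝ) (hQy : ∀ x : ℝ, stdNormalCDF (Qy x) = q (stdNormalCDF x)) :
    Tendsto (fun x : ℝ => Qy x / (-((2 ^ (1 - η) * k) ^ ((1:ℝ)/2) * |x| ^ η)))
      atBot (𝓝 1) := by
  obtain ⟨hη0, hη1⟩ := hη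
  set T : ℝ → ℝ := fun x => (2 ^ (1 - η) * k) ^ ((1:ℝ)/2) * |x| ^ η with hT
  have hTpos : ∀ x : ℝ, x ≠ 0 → 0 < T x := by
    intro x hx
    exact mul_pos (Real.rpow_pos_of_pos (mul_pos (Real.rpow_pos_of_pos two_pos _) hk) _)
      (Real.rpow_pos_of_pos (abs_pos.2 hx) _)
  have hTsq : ∀ x : ℝ, (T x) ^ 2 = 2 * (k * (x ^ 2 / 2) ^ η) := by
    intro x
    have hb : (0:ℝ) ≤ 2 ^ (1 - η) * k :=
      (mul_pos (Real.rpow_pos_of_pos two_pos _) hk).le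
    have e1 : ((2 ^ (1 - η) * k) ^ ((1:ℝ)/2)) ^ 2 = 2 ^ (1 - η) * k := by
      rw [← Real.rpow_natCast ((2 ^ (1 - η) * k) ^ ((1:ℝ)/2)) 2, ← Real.rpow_mul hb]
      norm_num
    have e2 : (|x| ^ η) ^ 2 = (x ^ 2) ^ η := by
      rw [← Real.rpow_natCast (|x| ^ η) 2, ← Real.rpow_mul (abs_nonneg x),
        ← sq_abs x, ← Real.rpow_natCast |x| 2, ← Real.rpow_mul (abs_nonneg x)]
      ring_nf
    have e3 : ((x:ℝ) ^ 2 / 2) ^ η = (x ^ 2) ^ η / 2 ^ η :=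
      Real.div_rpow (sq_nonneg x) (by norm_num : (0:ℝ) ≤ 2) η
    have e4 : (2:ℝ) ^ (1 - η) = 2 / 2 ^ η := by
      rw [Real.rpow_sub two_pos, Real.rpow_one]
    have h2η : (0:ℝ) < 2 ^ η := Real.rpow_pos_of_pos two_pos _
    rw [hT, mul_pow, e1, e2, e3, e4]
    field_simp
  -- step 1 : ratio with -log of CDF at Qy
  have hg_eq : ∀ x : ℝ, -Real.log (q (stdNormalCDF x)) = -Real.log (stdNormalCDF (Qy x)) :=
    fun x => by rw [hQy]
  have h1 : Tendsto (fun x : ℝ =>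
      (-Real.log (stdNormalCDF (Qy x))) / (k * (-Real.log (stdNormalCDF x)) ^ η))
      atBot (𝓝 1) := by
    have h := hq.comp L2
    exact h.congr fun x => by rw [Function.comp_apply, hg_eq x]
  -- step 2 : (L x)^η / (x²/2)^η → 1
  have hpow : Tendsto (fun y : ℝ => y ^ η) (𝓝 (1:ℝ)) (𝓝 (1:ℝ)) := by
    have h := (Real.continuousAt_rpow_const 1 η (Or.inl one_ne_zero)).tendsto
    simpa using h
  have h2 : Tendsto (fun x : ℝ =>
      (-Real.log (stdNormalCDF x)) ^ η / (x ^ 2 / 2) ^ η) atBot (𝓝 1) := by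
    have h := hpow.comp L1
    refine h.congr' ?_
    filter_upwards [eventually_le_atBot (-1 : ℝ)] with x hx
    have hx2 : (0:ℝ) < x ^ 2 / 2 := by nlinarith
    have hL : 0 ≤ -Real.log (stdNormalCDF x) := le_trans hx2.le (neglog_Phi_lower hx)
    rw [Function.comp_apply, Real.div_rpow hL hx2.le]
  -- step 3
  have h3 : Tendsto (fun x : ℝ =>
      (-Real.log (stdNormalCDF (Qy x))) / (k * (x ^ 2 / 2) ^ η)) atBot (𝓝 1) := by
    have h := h1.mul h2
    rw [mul_one] at h
    refine h.congr' ?_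
    filter_upwards [eventually_le_atBot (-1 : ℝ)] with x hx
    have hx2 : (0:ℝ) < x ^ 2 / 2 := by nlinarith
    have hB : (0:ℝ) < -Real.log (stdNormalCDF x) := lt_of_lt_of_le hx2 (neglog_Phi_lower hx)
    have hBη : (0:ℝ) < (-Real.log (stdNormalCDF x)) ^ η := Real.rpow_pos_of_pos hB _
    have hCη : (0:ℝ) < (x ^ 2 / 2) ^ η := Real.rpow_pos_of_pos hx2 _
    field_simp
  -- denominator tends to atTop
  have hsq : Tendsto (fun x : ℝ => x ^ 2 / 2) atBot atTop := by
    refine tendsto_atTop_mono' atBot ?_ tendsto_neg_atBot_atTop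
    filter_upwards [eventually_le_atBot (-2 : ℝ)] with x hx
    nlinarith
  have hD : Tendsto (fun x : ℝ => k * (x ^ 2 / 2) ^ η) atBot atTop := by
    have h := (tendsto_rpow_atTop hη0).comp hsq
    exact Tendsto.const_mul_atTop hk h
  -- g → atTop
  have hg_top : Tendsto (fun x : ℝ => -Real.log (stdNormalCDF (Qy x))) atBot atTop := by
    have hev : ∀ᶠ x in atBot, k * (x ^ 2 / 2) ^ η / 2
        ≤ -Real.log (stdNormalCDF (Qy x)) := by
      filter_upwards [h3.eventually (eventually_gt_nhds (by norm_num : (1:ℝ)/2 < 1)),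
        hD.eventually_ge_atTop 1] with x hr hD1
      have hDpos : (0:ℝ) < k * (x ^ 2 / 2) ^ η := lt_of_lt_of_le one_pos hD1
      rw [lt_div_iff₀ hDpos] at hr
      linarith
    exact tendsto_atTop_mono' atBot hev (hD.atTop_div_const two_pos)
  -- Qy → atBot
  have h5 : Tendsto Qy atBot atBot := by
    rw [tendsto_atBot]
    intro b
    filter_upwards [hg_top.eventually_gt_atTop (-Real.log (stdNormalCDF b))] with x hx
    by_contra hcon
    push_neg at hcon
    have hmono := Real.log_le_log (Phi_pos b) (Phi_mono hcon.le)
    linarith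
  -- L(Qy)/((Qy)²/2) → 1
  have h6 : Tendsto (fun x : ℝ =>
      (-Real.log (stdNormalCDF (Qy x))) / ((Qy x) ^ 2 / 2)) atBot (𝓝 1) :=
    L1.comp h5
  -- (Qy)²/2 over k (x²/2)^η → 1
  have h7 : Tendsto (fun x : ℝ => ((Qy x) ^ 2 / 2) / (k * (x ^ 2 / 2) ^ η)) atBot (𝓝 1) := by
    have h := h3.div h6 one_ne_zero
    rw [div_one] at h
    refine h.congr' ?_
    filter_upwards [h5.eventually (eventually_le_atBot (-1 : ℝ)),
      hg_top.eventually_ge_atTop 1] with x hQ hg1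
    have hq2 : (0:ℝ) < (Qy x) ^ 2 / 2 := by nlinarith
    have hgpos : (0:ℝ) < -Real.log (stdNormalCDF (Qy x)) := lt_of_lt_of_le one_pos hg1
    simp only [Pi.div_apply]
    rw [div_div_div_cancel_left' _ _ hgpos.ne']
  -- (Qy)² / (T)² → 1
  have h8 : Tendsto (fun x : ℝ => (Qy x) ^ 2 / (T x) ^ 2) atBot (𝓝 1) := by
    refine h7.congr fun x => ?_
    rw [hTsq x]
    ring_nf
  -- take square roots
  have h9 : Tendsto (fun x : ℝ => |Qy x| / T x) atBot (𝓝 1) := by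
    have h := (Real.continuous_sqrt.tendsto 1).comp h8
    rw [Real.sqrt_one] at h
    refine h.congr' ?_
    filter_upwards [eventually_le_atBot (-1 : ℝ)] with x hx
    have hxne : x ≠ 0 := by intro h0; rw [h0] at hx; norm_num at hx
    rw [Function.comp_apply, Real.sqrt_div (sq_nonneg _), Real.sqrt_sq_eq_abs,
      Real.sqrt_sq_eq_abs, abs_of_pos (hTpos x hxne)]
  -- conclude
  refine h9.congr' ?_
  filter_upwards [h5.eventually (eventually_le_atBot (-1 : ℝ)),
    eventually_le_atBot (-1 : ℝ)] with x hQ hx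
  have hxne : x ≠ 0 := by intro h0; rw [h0] at hx; norm_num at hx
  rw [abs_of_neg (by linarith : Qy x < 0), div_neg, neg_div]
end
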